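/- Let f be a nonnegative trigonometric polynomial, let g ≥ 2 and k = n/g ∈ ℕ, and let p be a trigonometric polynomial satisfying the TGM condition (i) at every zero of f and the TGM condition (ii) globally. Let f̂(x) = (1/g) Σ_{y ∈ Ω_g(x/g)} f(y)|p(y)|². If the trigonometric polynomial f|p|² has degree c, then f̂ is a trigonometric polynomial of degree at most ⌊c/g⌋. -/

import Mathlib

open Complex Filter Topology

noncomputable section

/-- A real-valued function is a trigonometric polynomial: a finite sum `∑_{|j|≤c} a_j e^{ijx}`. -/
def IsTrigPolyR (f : ℝ → ℝ) : Prop :=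
  ∃ (c : ℕ) (a : ℤ → ℂ), ∀ x : ℝ,
    (f x : ℂ) = ∑ j ∈ Finset.Icc (-(c : ℤ)) (c : ℤ), a j * Complex.exp (Complex.I * (j : ℂ) * (x : ℂ))

/-- TGM condition (i): for every zero `x₀` of `f` (in `[0,2π)`), for each `k = 1,…,g−1`,
`lim_{x→x₀} p(x + 2πk/g)² / f(x)` exists finite. -/
def TGMCondOne (f p : ℝ → ℝ) (g : ℕ) : Prop :=
  ∀ x₀ ∈ Set.Ico (0 : ℝ) (2 * Real.pi), f x₀ = 0 →
    ∀ j : ℕ, 1 ≤ j → j < g →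
      ∃ L : ℝ,
        Filter.Tendsto (fun x : ℝ => (p (x + 2 * Real.pi * (j : ℝ) / (g : ℝ)))^2 / f x)
          (nhdsWithin x₀ {x : ℝ | f x ≠ 0}) (nhds L)

/-- TGM condition (ii): `∑_{y ∈ Ω_g(x)} p(y)² > 0` for all `x ∈ [0,2π)`. -/
def TGMCondTwo (p : ℝ → ℝ) (g : ℕ) : Prop :=
  ∀ x ∈ Set.Ico (0 : ℝ) (2 * Real.pi),
    0 < ∑ j ∈ Finset.range g, (p (x + 2 * Real.pi * (j : ℝ) / (g : ℝ)))^2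

/-- The projected symbol `f̂(x) = (1/g) ∑_{y ∈ Ω_g(x/g)} f(y) |p(y)|²`. -/
def projSymbol (g : ℕ) (f p : ℝ → ℝ) : ℝ → ℝ := fun x =>
  ((g : ℝ))⁻¹ *
    ∑ j ∈ Finset.range g,
      f ((x + 2 * Real.pi * (j : ℝ)) / (g : ℝ)) * (p ((x + 2 * Real.pi * (j : ℝ)) / (g : ℝ)))^2

theorem projSymbol_degree' (g : ℕ) (hg : 2 ≤ g)
    (f p : ℝ → ℝ)
    (c : ℕ)
    (hdeg : ∃ a : ℤ → ℂ, ∀ x : ℝ,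
      ((f x * (p x)^2 : ℝ) : ℂ) =
        ∑ j ∈ Finset.Icc (-(c : ℤ)) (c : ℤ), a j * Complex.exp (Complex.I * (j : ℂ) * (x : ℂ))) :
    ∃ b : ℤ → ℂ, ∀ x : ℝ,
      ((((g : ℝ))⁻¹ *
    ∑ j ∈ Finset.range g,
      f ((x + 2 * Real.pi * (j : ℝ)) / (g : ℝ)) * (p ((x + 2 * Real.pi * (j : ℝ)) / (g : ℝ)))^2 : ℝ) : ℂ) =
        ∑ j ∈ Finset.Icc (-((c / g : ℕ) : ℤ)) ((c / g : ℕ) : ℤ),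
          b j * Complex.exp (Complex.I * (j : ℂ) * (x : ℂ)) := by
  obtain ⟨a, ha⟩ := hdeg
  have hgpos : 0 < g := by omega
  have hg0 : (g : ℂ) ≠ 0 := by exact_mod_cast Nat.pos_iff_ne_zero.mp hgpos
  have hgR : (g : ℝ) ≠ 0 := by exact_mod_cast Nat.pos_iff_ne_zero.mp hgpos
  have hgZ : (0 : ℤ) < (g : ℤ) := by exact_mod_cast hgpos
  have hπ : (Real.pi : ℂ) ≠ 0 := by exact_mod_cast Real.pi_ne_zero
  have hcast : ((c / g : ℕ) : ℤ) = (c : ℤ) / (g : ℤ) := Int.natCast_ediv c g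
  refine ⟨fun l => a ((g : ℤ) * l), fun x => ?_⟩
  have ha' : ∀ y : ℝ, ((f y : ℂ)) * ((p y : ℂ))^2 =
      ∑ j ∈ Finset.Icc (-(c : ℤ)) (c : ℤ), a j * Complex.exp (Complex.I * (j : ℂ) * (y : ℂ)) := by
    intro y
    have := ha y
    push_cast at this
    exact this
  -- geometric sum of roots of unity
  have hgeom : ∀ j : ℤ, (∑ m ∈ Finset.range g,
      (Complex.exp (Complex.I * (j : ℂ) * (2 * Real.pi / g))) ^ m)
      = if (g : ℤ) ∣ j then (g : ℂ) else 0 := by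
    intro j
    by_cases hd : (g : ℤ) ∣ j
    · rw [if_pos hd]
      obtain ⟨l, rfl⟩ := hd
      have h1 : Complex.exp (Complex.I * ((((g:ℤ) * l : ℤ)) : ℂ) * (2 * Real.pi / g)) = 1 := by
        have harg : (Complex.I * ((((g:ℤ) * l : ℤ)) : ℂ) * (2 * Real.pi / g)) =
            (l : ℂ) * (2 * Real.pi * Complex.I) := by
          push_cast
          field_simp
        rw [harg, Complex.exp_int_mul_two_pi_mul_I]
      push_cast at h1 ⊢
      simp [h1]
    · have hw1 : Complex.exp (Complex.I * (j : ℂ) * (2 * Real.pi / g)) ≠ 1 := by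
        intro h
        rw [Complex.exp_eq_one_iff] at h
        obtain ⟨m, hm⟩ := h
        apply hd
        refine ⟨m, ?_⟩
        field_simp at hm
        have h3 : (2 * (Real.pi:ℂ) * Complex.I) * (j : ℂ) =
            (2 * (Real.pi:ℂ) * Complex.I) * ((g : ℂ) * (m : ℂ)) := by
          linear_combination (2 * (Real.pi:ℂ) * Complex.I) * hm
        have h4 : (j : ℂ) = (g : ℂ) * (m : ℂ) :=
          mul_left_cancel₀ (by simp [hπ, Complex.I_ne_zero]) h3
        exact_mod_cast h4
      rw [geom_sum_eq hw1]
      have hpow : (Complex.exp (Complex.I * (j : ℂ) * (2 * Real.pi / g))) ^ g = 1 := by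
        rw [← Complex.exp_nat_mul]
        have harg : ((g : ℕ) : ℂ) * (Complex.I * (j : ℂ) * (2 * Real.pi / g)) =
            (j : ℂ) * (2 * Real.pi * Complex.I) := by
          field_simp
        rw [harg, Complex.exp_int_mul_two_pi_mul_I]
      rw [hpow, if_neg hd]
      simp
  -- main computation
  push_cast
  simp only [ha']
  push_cast
  simp only [Finset.mul_sum]
  rw [Finset.sum_comm]
  have hterm : ∀ j ∈ Finset.Icc (-(c : ℤ)) (c : ℤ),
      (∑ m ∈ Finset.range g, (g : ℂ)⁻¹ *
        (a j * Complex.exp (Complex.I * (j : ℂ) * (((x : ℂ) + 2 * Real.pi * m) / g))))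
      = (if (g : ℤ) ∣ j then a j * Complex.exp (Complex.I * (j : ℂ) * ((x : ℂ) / g)) else 0) := by
    intro j _
    have hsplit : ∀ m : ℕ, Complex.exp (Complex.I * (j : ℂ) * (((x : ℂ) + 2 * Real.pi * m) / g))
        = Complex.exp (Complex.I * (j : ℂ) * ((x : ℂ) / g)) *
          (Complex.exp (Complex.I * (j : ℂ) * (2 * Real.pi / g))) ^ m := by
      intro m
      rw [← Complex.exp_nat_mul, ← Complex.exp_add]
      congr 1
      field_simp
    simp only [hsplit]
    have : (∑ m ∈ Finset.range g, (g : ℂ)⁻¹ *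
        (a j * (Complex.exp (Complex.I * (j : ℂ) * ((x : ℂ) / g)) *
          (Complex.exp (Complex.I * (j : ℂ) * (2 * Real.pi / g))) ^ m)))
        = (g : ℂ)⁻¹ * (a j * Complex.exp (Complex.I * (j : ℂ) * ((x : ℂ) / g))) *
          (∑ m ∈ Finset.range g, (Complex.exp (Complex.I * (j : ℂ) * (2 * Real.pi / g))) ^ m) := by
      rw [Finset.mul_sum]
      apply Finset.sum_congr rfl
      intro m _
      ring
    rw [this, hgeom j]
    by_cases hd : (g : ℤ) ∣ j
    · rw [if_pos hd, if_pos hd]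
      field_simp
    · rw [if_neg hd, if_neg hd, mul_zero]
  rw [Finset.sum_congr rfl hterm, ← Finset.sum_filter]
  refine Finset.sum_nbij' (fun j => j / (g : ℤ)) (fun l => (g : ℤ) * l) ?_ ?_ ?_ ?_ ?_
  · intro j hj
    rw [Finset.mem_filter, Finset.mem_Icc] at hj
    obtain ⟨⟨h1, h2⟩, l, rfl⟩ := hj
    rw [Finset.mem_Icc, Int.mul_ediv_cancel_left _ (by omega)]
    constructor
    · rw [neg_le]
      refine (Int.le_ediv_iff_mul_le hgZ).mpr ?_
      linarith
    · refine (Int.le_ediv_iff_mul_le hgZ).mpr ?_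
      linarith
  · intro l hl
    rw [Finset.mem_Icc] at hl
    rw [Finset.mem_filter, Finset.mem_Icc]
    refine ⟨⟨?_, ?_⟩, ⟨l, rfl⟩⟩
    · have := (Int.le_ediv_iff_mul_le hgZ).mp (neg_le.mp hl.1)
      linarith
    · have := (Int.le_ediv_iff_mul_le hgZ).mp hl.2
      linarith
  · intro j hj
    rw [Finset.mem_filter] at hj
    obtain ⟨-, l, rfl⟩ := hj
    rw [Int.mul_ediv_cancel_left _ (by omega)]
  · intro l _
    rw [Int.mul_ediv_cancel_left _ (by omega)]
  · intro j hj
    rw [Finset.mem_filter] at hj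
    obtain ⟨-, l, rfl⟩ := hj
    rw [Int.mul_ediv_cancel_left _ (by omega)]
    congr 2
    push_cast
    field_simp

theorem projSymbol_degree (n g k : ℕ) (hg : 2 ≤ g) (hk : 0 < k) (hn : n = g * k)
    (f p : ℝ → ℝ) (hf : IsTrigPolyR f) (hf0 : ∀ x, 0 ≤ f x) (hp : IsTrigPolyR p)
    (hc1 : TGMCondOne f p g) (hc2 : TGMCondTwo p g)
    (c : ℕ)
    (hdeg : ∃ a : ℤ → ℂ, ∀ x : ℝ,
      ((f x * (p x)^2 : ℝ) : ℂ) =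
        ∑ j ∈ Finset.Icc (-(c : ℤ)) (c : ℤ), a j * Complex.exp (Complex.I * (j : ℂ) * (x : ℂ))) :
    ∃ b : ℤ → ℂ, ∀ x : ℝ,
      ((projSymbol g f p x : ℝ) : ℂ) =
        ∑ j ∈ Finset.Icc (-((c / g : ℕ) : ℤ)) ((c / g : ℕ) : ℤ),
          b j * Complex.exp (Complex.I * (j : ℂ) * (x : ℂ)) := by
  exact projSymbol_degree' g hg f p c hdeg
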